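/- The integral closure of a monomial ideal in a polynomial ring over a field is again a monomial ideal. -/

import Mathlib

open MvPolynomial

variable {k : Type} [Field k] {n : ℕ}

/-- An ideal of `k[x₁,…,xₙ]` is a *monomial ideal* if it is generated by monomials. -/
def IsMonomialIdeal (I : Ideal (MvPolynomial (Fin n) k)) : Prop :=
  ∃ G : Set (Fin n →₀ ℕ), I = Ideal.span ((fun A => (monomial A (1 : k))) '' G)

/-- The integral closure of an ideal `I`, as a set: all elements `f` satisfying an
equation `f^r + a₁ f^{r-1} + ⋯ + a_r = 0` with `aᵢ ∈ Iⁱ`. -/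
def intCl (I : Ideal (MvPolynomial (Fin n) k)) : Set (MvPolynomial (Fin n) k) :=
  {f | ∃ r : ℕ, 0 < r ∧ ∃ a : ℕ → MvPolynomial (Fin n) k,
    (∀ i, 1 ≤ i → i ≤ r → a i ∈ I ^ i) ∧
    f ^ r + ∑ i ∈ Finset.Icc 1 r, a i * f ^ (r - i) = 0}

/-- The exponent vectors of the minimal monomial generators of a set `T` of polynomials:
those `A` with `x^A ∈ T` minimal in the componentwise (divisibility) order. -/
def minExps (T : Set (MvPolynomial (Fin n) k)) : Set (Fin n →₀ ℕ) :=
  {A | monomial A (1 : k) ∈ T ∧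
    ∀ B : Fin n →₀ ℕ, monomial B (1 : k) ∈ T → B ≤ A → B = A}

namespace IntClAux

variable {I : Ideal (MvPolynomial (Fin n) k)}

lemma zero_mem_intCl : (0 : MvPolynomial (Fin n) k) ∈ intCl I :=
  ⟨1, one_pos, fun _ => 0, fun i _ _ => by simp, by simp⟩

lemma mem_intCl_of_crit {f : MvPolynomial (Fin n) k} (N : Ideal (MvPolynomial (Fin n) k))
    (hN : N ≠ ⊥) (hle : Ideal.span {f} * N ≤ I * N) : f ∈ intCl I := by
  haveI : Module.Finite (MvPolynomial (Fin n) k) N :=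
    Module.Finite.iff_fg.mpr (IsNoetherian.noetherian N)
  set φ := algebraMap (MvPolynomial (Fin n) k) (Module.End (MvPolynomial (Fin n) k) N) f with hφ
  have hrange : LinearMap.range φ ≤ I • (⊤ : Submodule (MvPolynomial (Fin n) k) N) := by
    rintro z ⟨m, rfl⟩
    rw [Submodule.mem_smul_top_iff]
    have h1 : (f * (m : MvPolynomial (Fin n) k)) ∈ Ideal.span {f} * N :=
      Ideal.mul_mem_mul (Ideal.mem_span_singleton_self f) m.2
    have h2 := hle h1
    rw [smul_eq_mul]
    simpa [hφ, Module.algebraMap_end_apply] using h2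
  obtain ⟨p, hmonic, -, hcoeff, haeval⟩ :=
    LinearMap.exists_monic_and_natDegree_eq_and_coeff_mem_pow_and_aeval_eq_zero (MvPolynomial (Fin n) k) φ I hrange
  obtain ⟨z, hzN, hz0⟩ := Submodule.exists_mem_ne_zero_of_ne_bot hN
  have heval : Polynomial.eval f p = 0 := by
    rw [hφ, Polynomial.aeval_algebraMap_apply] at haeval
    have h2 := congrFun (congrArg DFunLike.coe haeval) ⟨z, hzN⟩
    simp only [Module.algebraMap_end_apply, LinearMap.zero_apply] at h2
    have h3 : (Polynomial.aeval f p : MvPolynomial (Fin n) k) * z = 0 := by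
      have := congrArg Subtype.val h2
      simpa [Submodule.coe_smul_of_tower, smul_eq_mul] using this
    have h4 := mul_eq_zero.mp h3
    rcases h4 with h4 | h4
    · simpa [Polynomial.coe_aeval_eq_eval] using h4
    · exact absurd h4 hz0
  set r := p.natDegree with hrdef
  have hr : 0 < r := by
    rcases Nat.eq_zero_or_pos r with h | h
    · exfalso
      have hp1 : p = 1 := hmonic.natDegree_eq_zero.mp h
      rw [hp1] at heval
      simp at heval
    · exact h
  refine ⟨r, hr, fun i => p.coeff (r - i), fun i h1 h2 => ?_, ?_⟩
  · have := hcoeff (r - i)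
    rwa [show p.natDegree - (r - i) = i by omega] at this
  · have hsum := Polynomial.eval_eq_sum_range (p := p) f
    rw [heval, Finset.sum_range_succ, ← hrdef, hmonic.coeff_natDegree, one_mul] at hsum
    have hre : ∑ i ∈ Finset.Icc 1 r, p.coeff (r - i) * f ^ (r - i)
        = ∑ j ∈ Finset.range r, p.coeff j * f ^ j := by
      refine Finset.sum_nbij' (fun i => r - i) (fun j => r - j) ?_ ?_ ?_ ?_ ?_
      · intro a ha; simp only [Finset.mem_Icc] at ha; simp only [Finset.mem_range]; omega
      · intro a ha; simp only [Finset.mem_range] at ha; simp only [Finset.mem_Icc]; omega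
      · intro a ha; simp only [Finset.mem_Icc] at ha; omega
      · intro a ha; simp only [Finset.mem_range] at ha; omega
      · intro a _; rfl
    rw [hre]
    linear_combination -hsum

lemma crit_of_mem_intCl {f : MvPolynomial (Fin n) k} (hf : f ∈ intCl I) :
    ∃ N : Ideal (MvPolynomial (Fin n) k), N ≠ ⊥ ∧ Ideal.span {f} * N ≤ I * N := by
  obtain ⟨r, hr, a, ha, heq⟩ := hf
  by_cases hf0 : f = 0
  · refine ⟨⊤, fun h => one_ne_zero ((Submodule.eq_bot_iff _).mp h 1 trivial), ?_⟩
    rw [hf0, Ideal.span_singleton_eq_bot.mpr rfl]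
    exact Ideal.mul_mono bot_le le_rfl
  refine ⟨∑ j ∈ Finset.range r, I ^ j * Ideal.span {f ^ (r - 1 - j)}, ?_, ?_⟩
  · intro hbot
    have hmem : f ^ (r - 1) ∈ (⊥ : Ideal (MvPolynomial (Fin n) k)) := by
      rw [← hbot, Ideal.sum_eq_sup]
      refine Finset.le_sup (f := fun j => I ^ j * Ideal.span {f ^ (r - 1 - j)})
        (Finset.mem_range.mpr hr) ?_
      simp only [pow_zero, one_mul, Nat.sub_zero]
      exact Ideal.subset_span rfl
    exact pow_ne_zero _ hf0 (Submodule.mem_bot _ |>.mp hmem)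
  · rw [Finset.mul_sum]
    rw [Ideal.sum_eq_sup]
    refine Finset.sup_le fun j hj => ?_
    rw [Finset.mem_range] at hj
    have hto : ∀ i ∈ Finset.Icc 1 r, I ^ (i - 1) * Ideal.span {f ^ (r - 1 - (i - 1))}
        ≤ ∑ j ∈ Finset.range r, I ^ j * Ideal.span {f ^ (r - 1 - j)} := by
      intro i hi
      rw [Finset.mem_Icc] at hi
      rw [Ideal.sum_eq_sup]
      exact Finset.le_sup (f := fun j => I ^ j * Ideal.span {f ^ (r - 1 - j)})
        (Finset.mem_range.mpr (by omega))
    rcases Nat.eq_zero_or_pos j with rfl | hjpos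
    · -- j = 0 case
      have h1 : Ideal.span {f} * (I ^ 0 * Ideal.span {f ^ (r - 1 - 0)})
          = Ideal.span {f ^ r} := by
        rw [pow_zero, one_mul, Ideal.span_singleton_mul_span_singleton,
          Nat.sub_zero, ← pow_succ', show r - 1 + 1 = r by omega]
      rw [h1, Ideal.span_singleton_le_iff_mem]
      have hfr : f ^ r = - ∑ i ∈ Finset.Icc 1 r, a i * f ^ (r - i) := by
        linear_combination heq
      rw [hfr]
      refine neg_mem (Submodule.sum_mem _ fun i hi => ?_)
      rw [Finset.mem_Icc] at hi
      have h2 : a i * f ^ (r - i) ∈ I ^ i * Ideal.span {f ^ (r - i)} :=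
        Ideal.mul_mem_mul (ha i hi.1 hi.2) (Ideal.subset_span rfl)
      obtain ⟨ii, rfl⟩ := Nat.exists_eq_succ_of_ne_zero (by omega : i ≠ 0)
      have h3 : I ^ (ii + 1) * Ideal.span {f ^ (r - (ii + 1))}
          = I * (I ^ ((ii + 1) - 1) * Ideal.span {f ^ (r - 1 - ((ii + 1) - 1))}) := by
        rw [show (ii + 1) - 1 = ii from rfl, show r - 1 - ii = r - (ii + 1) by omega]
        ring
      rw [h3] at h2
      exact Ideal.mul_mono_right (hto (ii + 1) (Finset.mem_Icc.mpr hi)) h2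
    · -- j ≥ 1
      obtain ⟨jj, rfl⟩ := Nat.exists_eq_succ_of_ne_zero (by omega : j ≠ 0)
      have h1 : Ideal.span {f} * (I ^ (jj + 1) * Ideal.span {f ^ (r - 1 - (jj + 1))})
          = I * (I ^ jj * Ideal.span {f ^ (r - 1 - jj)}) := by
        rw [show f ^ (r - 1 - jj) = f ^ (r - 1 - (jj + 1)) * f by
              rw [← pow_succ]; congr 1; omega,
          ← Ideal.span_singleton_mul_span_singleton]
        ring
      rw [h1]
      have := hto (jj + 1) (Finset.mem_Icc.mpr ⟨by omega, by omega⟩)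
      simp only [Nat.add_sub_cancel] at this
      exact Ideal.mul_mono_right this

/-- `intCl I` as an ideal. -/
def intClIdeal (I : Ideal (MvPolynomial (Fin n) k)) : Ideal (MvPolynomial (Fin n) k) where
  carrier := intCl I
  zero_mem' := zero_mem_intCl
  add_mem' := by
    intro f g hf hg
    obtain ⟨N₁, hN₁, hle₁⟩ := crit_of_mem_intCl hf
    obtain ⟨N₂, hN₂, hle₂⟩ := crit_of_mem_intCl hg
    refine mem_intCl_of_crit (N₁ * N₂) (by
      rw [Ne, Ideal.mul_eq_bot]; tauto) ?_
    have hspan : Ideal.span {f + g} ≤ Ideal.span {f} + Ideal.span {g} := by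
      rw [Ideal.span_singleton_le_iff_mem]
      exact Submodule.add_mem_sup (Ideal.subset_span rfl) (Ideal.subset_span rfl)
    calc Ideal.span {f + g} * (N₁ * N₂)
        ≤ (Ideal.span {f} + Ideal.span {g}) * (N₁ * N₂) := Ideal.mul_mono_left hspan
      _ = Ideal.span {f} * N₁ * N₂ + Ideal.span {g} * N₂ * N₁ := by ring
      _ ≤ I * N₁ * N₂ + I * N₂ * N₁ := by
          exact add_le_add (Ideal.mul_mono_left hle₁) (Ideal.mul_mono_left hle₂)
      _ ≤ I * (N₁ * N₂) := by
          have e1 : I * N₁ * N₂ = I * (N₁ * N₂) := by ring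
          have e2 : I * N₂ * N₁ = I * (N₁ * N₂) := by ring
          rw [e1, e2, Ideal.add_eq_sup]
          exact sup_le le_rfl le_rfl
  smul_mem' := by
    intro c f hf
    obtain ⟨N, hN, hle⟩ := crit_of_mem_intCl hf
    refine mem_intCl_of_crit N hN ?_
    have h1 : Ideal.span {c • f} = Ideal.span {c} * Ideal.span {f} := by
      rw [Ideal.span_singleton_mul_span_singleton, smul_eq_mul]
    calc Ideal.span {c • f} * N = Ideal.span {c} * (Ideal.span {f} * N) := by
          rw [h1, mul_assoc]
      _ ≤ Ideal.span {c} * (I * N) := Ideal.mul_mono_right hle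
      _ ≤ I * N := Ideal.mul_le_right

lemma intClIdeal_coe (I : Ideal (MvPolynomial (Fin n) k)) :
    (intClIdeal I : Set (MvPolynomial (Fin n) k)) = intCl I := rfl

/-! ### Monomial spans and their powers -/

noncomputable def mSpan (F : Type) [Field F] (G : Set (Fin n →₀ ℕ)) : Ideal (MvPolynomial (Fin n) F) :=
  Ideal.span ((fun A => monomial A (1 : F)) '' G)

def sumSet (G : Set (Fin n →₀ ℕ)) : ℕ → Set (Fin n →₀ ℕ)
  | 0 => {0}
  | (m + 1) => Set.image2 (· + ·) G (sumSet G m)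

lemma mSpan_pow (F : Type) [Field F] (G : Set (Fin n →₀ ℕ)) (m : ℕ) :
    (mSpan F G (n := n)) ^ m
      = Ideal.span ((fun A => monomial A (1 : F)) '' sumSet G m) := by
  induction m with
  | zero =>
    simp only [pow_zero, sumSet, Set.image_singleton, Ideal.one_eq_top]
    rw [show (monomial (0 : Fin n →₀ ℕ) (1 : F)) = 1 by
      rw [monomial_zero']; exact map_one C]
    rw [Ideal.span_singleton_one]
  | succ m ih =>
    rw [pow_succ', ih, mSpan, Ideal.span_mul_span']
    congr 1
    rw [show sumSet G (m + 1) = Set.image2 (· + ·) G (sumSet G m) from rfl]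
    ext g
    simp only [Set.mem_mul, Set.mem_image, Set.mem_image2]
    constructor
    · rintro ⟨-, ⟨A, hA, rfl⟩, -, ⟨B, hB, rfl⟩, rfl⟩
      exact ⟨A + B, ⟨A, hA, B, hB, rfl⟩, by rw [monomial_mul, one_mul]⟩
    · rintro ⟨CC, ⟨A, hA, B, hB, rfl⟩, rfl⟩
      exact ⟨_, ⟨A, hA, rfl⟩, _, ⟨B, hB, rfl⟩, by rw [monomial_mul, one_mul]⟩

lemma mon_mem_mSpan_pow_iff (F : Type) [Field F] (G : Set (Fin n →₀ ℕ))
    (C : Fin n →₀ ℕ) (m : ℕ) :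
    monomial C (1 : F) ∈ (mSpan F G (n := n)) ^ m ↔ ∃ B ∈ sumSet G m, B ≤ C := by
  rw [mSpan_pow, mem_ideal_span_monomial_image]
  simp [support_monomial]

lemma map_mem_mSpan_pow {K : Type} [Field K] (φ : k →+* K) (G : Set (Fin n →₀ ℕ))
    {a : MvPolynomial (Fin n) k} {m : ℕ} (ha : a ∈ (mSpan k G (n := n)) ^ m) :
    MvPolynomial.map φ a ∈ (mSpan K G (n := n)) ^ m := by
  rw [mSpan_pow, mem_ideal_span_monomial_image] at ha ⊢
  intro C hC
  exact ha C (MvPolynomial.support_map_subset φ a hC)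

/-! ### Scaling automorphisms -/

variable {F : Type} [Field F]

def tw (t : Fin n → Fˣ) (A : Fin n →₀ ℕ) : F := A.prod fun i a => (t i : F) ^ a

noncomputable def scaleHom (t : Fin n → Fˣ) :
    MvPolynomial (Fin n) F →ₐ[F] MvPolynomial (Fin n) F :=
  aeval fun i => C ((t i : F)) * X i

lemma scaleHom_monomial (t : Fin n → Fˣ) (A : Fin n →₀ ℕ) (c : F) :
    scaleHom t (monomial A c) = C (tw t A) * monomial A c := by
  rw [scaleHom, aeval_monomial, monomial_eq]
  have h1 : (A.prod fun i a => (C ((t i : F)) * X i) ^ a)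
      = (A.prod fun i a => (C (((t i : F)) ^ a) : MvPolynomial (Fin n) F))
        * A.prod fun i a => (X i : MvPolynomial (Fin n) F) ^ a := by
    rw [← Finsupp.prod_mul]
    refine Finsupp.prod_congr fun i _ => ?_
    rw [mul_pow, map_pow]
  have h2 : (A.prod fun i a => (C (((t i : F)) ^ a) : MvPolynomial (Fin n) F))
      = C (tw t A) := by
    rw [tw, ← map_finsuppProd (C : F →+* MvPolynomial (Fin n) F)]
  rw [h1, h2, algebraMap_eq]
  ring

lemma scaleHom_mem_pow (t : Fin n → Fˣ) (G : Set (Fin n →₀ ℕ))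
    {x : MvPolynomial (Fin n) F} {i : ℕ} (hx : x ∈ (mSpan F G (n := n)) ^ i) :
    scaleHom t x ∈ (mSpan F G (n := n)) ^ i := by
  have hmapI : Ideal.map (scaleHom t).toRingHom (mSpan F G (n := n)) ≤ mSpan F G := by
    rw [Ideal.map_le_iff_le_comap, mSpan, Ideal.span_le]
    rintro g ⟨A, hA, rfl⟩
    simp only [SetLike.mem_coe, Ideal.mem_comap, AlgHom.toRingHom_eq_coe, RingHom.coe_coe]
    rw [scaleHom_monomial]
    exact Ideal.mul_mem_left _ _ (Ideal.subset_span ⟨A, hA, rfl⟩)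
  have h1 : scaleHom t x ∈ Ideal.map (scaleHom t).toRingHom ((mSpan F G (n := n)) ^ i) :=
    Ideal.mem_map_of_mem _ hx
  rw [Ideal.map_pow] at h1
  exact Ideal.pow_right_mono hmapI i h1

lemma scaleHom_intCl (t : Fin n → Fˣ) (G : Set (Fin n →₀ ℕ))
    {f : MvPolynomial (Fin n) F} (hf : f ∈ intCl (mSpan F G (n := n))) :
    scaleHom t f ∈ intCl (mSpan F G (n := n)) := by
  obtain ⟨r, hr, a, ha, heq⟩ := hf
  refine ⟨r, hr, fun i => scaleHom t (a i), fun i h1 h2 => scaleHom_mem_pow t G (ha i h1 h2), ?_⟩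
  have := congrArg (scaleHom t) heq
  simpa [map_add, map_pow, map_sum, map_mul] using this

/-! ### Extracting monomial terms over an infinite field -/

lemma monomial_mem_intCl_of_mem_intCl [Infinite F]
    (G : Set (Fin n →₀ ℕ)) {f : MvPolynomial (Fin n) F}
    (hf : f ∈ intCl (mSpan F G (n := n))) (A0 : Fin n →₀ ℕ) (hA0 : A0 ∈ f.support) :
    monomial A0 (f.coeff A0) ∈ intCl (mSpan F G (n := n)) := by
  classical
  set σ := f.support with hσ
  set v : (Fin n → Fˣ) → (↥σ → F) := fun t A => tw t (A : Fin n →₀ ℕ) with hv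
  -- the scaling vectors span everything
  have hspan : Submodule.span F (Set.range v) = ⊤ := by
    by_contra hne
    obtain ⟨φ, hφ0, hφ⟩ := Submodule.exists_dual_map_eq_bot_of_lt_top
      (lt_top_iff_ne_top.mpr hne) inferInstance
    have hvan : ∀ t, φ (v t) = 0 := fun t => by
      have h1 : φ (v t) ∈ Submodule.map φ (Submodule.span F (Set.range v)) :=
        Submodule.mem_map_of_mem (Submodule.subset_span ⟨t, rfl⟩)
      rw [hφ] at h1
      exact (Submodule.mem_bot F).mp h1
    have hdec : ∀ x : ↥σ → F, φ x = ∑ A : ↥σ, x A * φ (Pi.single A 1) := by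
      intro x
      conv_lhs => rw [show x = ∑ A : ↥σ, Pi.single A (x A) from (Finset.univ_sum_single x).symm]
      rw [map_sum]
      refine Finset.sum_congr rfl fun A _ => ?_
      rw [show (Pi.single A (x A) : ↥σ → F) = x A • (Pi.single A 1 : ↥σ → F) by
        funext B
        classical
        simp [Pi.single_apply]]
      rw [map_smul, smul_eq_mul]
    set lam : (Fin n →₀ ℕ) → F :=
      fun A => if h : A ∈ σ then φ (Pi.single (⟨A, h⟩ : ↥σ) 1) else 0 with hlamdef
    set g : MvPolynomial (Fin n) F := ∑ A ∈ σ, monomial A (lam A) with hg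
    have hgeval : ∀ u : Fin n → F, eval u (g * ∏ i : Fin n, X i) = 0 := by
      intro u
      by_cases hu : ∀ i, u i ≠ 0
      · set t : Fin n → Fˣ := fun i => Units.mk0 (u i) (hu i) with htdef
        have h1 : eval u g = φ (v t) := by
          rw [hg, map_sum, hdec (v t),
            ← Finset.sum_attach σ (fun A => eval u (monomial A (lam A)))]
          refine Finset.sum_congr rfl fun A _ => ?_
          rw [eval_monomial]
          have h2 : lam ↑A = φ (Pi.single A 1) := by
            rw [hlamdef]
            simp only [A.2, dif_pos, Subtype.coe_eta]
          rw [h2, hv]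
          simp only [tw, htdef, Units.val_mk0]
          ring
        rw [map_mul, h1, hvan t, zero_mul]
      · push_neg at hu
        obtain ⟨i, hi⟩ := hu
        rw [map_mul, map_prod]
        rw [Finset.prod_eq_zero (Finset.mem_univ i) (by rw [eval_X, hi]), mul_zero]
    have hgz : g = 0 := by
      have h2 : g * ∏ i : Fin n, X i = 0 :=
        MvPolynomial.funext (fun u => by rw [hgeval]; simp)
      have h3 : (∏ i : Fin n, X i : MvPolynomial (Fin n) F) ≠ 0 :=
        Finset.prod_ne_zero_iff.mpr fun i _ => X_ne_zero i
      exact (mul_eq_zero.mp h2).resolve_right h3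
    apply hφ0
    have hlam : ∀ A : ↥σ, φ (Pi.single A 1) = 0 := by
      intro A
      have h4 : coeff ↑A g = lam ↑A := by
        rw [hg, coeff_sum]
        simp only [coeff_monomial]
        rw [Finset.sum_ite_eq' σ (↑A) lam]
        simp [A.2]
      rw [hgz] at h4
      simp only [coeff_zero] at h4
      rw [hlamdef] at h4
      simpa only [A.2, dif_pos, Subtype.coe_eta] using h4.symm
    refine LinearMap.ext fun x => ?_
    rw [hdec x]
    simp [hlam]
  -- write the target coordinate vector as a combination
  have hmem : (Pi.single (⟨A0, hA0⟩ : ↥σ) 1 : ↥σ → F) ∈ Submodule.span F (Set.range v) := by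
    rw [hspan]; trivial
  obtain ⟨m, c, y, hsum⟩ := Submodule.mem_span_set'.mp hmem
  choose t ht using fun j => (y j).2
  have hψ : ∀ tt : Fin n → Fˣ, scaleHom tt f
      = ∑ A ∈ σ.attach, monomial (A : Fin n →₀ ℕ) (tw tt ↑A * coeff ↑A f) := by
    intro tt
    conv_lhs => rw [f.as_sum]
    rw [map_sum, ← Finset.sum_attach σ (fun A => scaleHom tt (monomial A (coeff A f)))]
    refine Finset.sum_congr rfl fun A _ => ?_
    rw [scaleHom_monomial, C_mul_monomial]
  have hcomb : ∑ j, c j • (scaleHom (t j)) f = monomial A0 (coeff A0 f) := by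
    have e1 : ∀ j, c j • (scaleHom (t j)) f
        = ∑ A ∈ σ.attach, monomial (A : Fin n →₀ ℕ) (c j * (tw (t j) ↑A * coeff ↑A f)) := by
      intro j
      rw [hψ, Finset.smul_sum]
      refine Finset.sum_congr rfl fun A _ => ?_
      rw [smul_eq_C_mul, C_mul_monomial]
    rw [Finset.sum_congr rfl (fun j _ => e1 j), Finset.sum_comm]
    have e2 : ∀ A : ↥σ,
        ∑ j, monomial (A : Fin n →₀ ℕ) (c j * (tw (t j) ↑A * coeff ↑A f))
        = monomial (A : Fin n →₀ ℕ)
            (((Pi.single (⟨A0, hA0⟩ : ↥σ) (1 : F) : ↥σ → F) A) * coeff ↑A f) := by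
      intro A
      rw [← map_sum (monomial (A : Fin n →₀ ℕ))]
      simp only [← mul_assoc]
      rw [← Finset.sum_mul]
      have h5 := congrFun hsum A
      rw [Finset.sum_apply] at h5
      have h6 : ∀ j : Fin m, (c j • ((y j : ↥σ → F))) A = c j * tw (t j) ↑A := by
        intro j
        rw [Pi.smul_apply, smul_eq_mul, ← ht j]
      rw [Finset.sum_congr rfl (fun j _ => h6 j)] at h5
      rw [h5]
    rw [Finset.sum_congr rfl (fun A _ => e2 A)]
    rw [Finset.sum_eq_single_of_mem (⟨A0, hA0⟩ : ↥σ) (Finset.mem_attach _ _)]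
    · simp
    · intro B _ hB
      rw [Pi.single_eq_of_ne hB, zero_mul, map_zero]
  have hmem2 : ∑ j, c j • (scaleHom (t j)) f ∈ intClIdeal (mSpan F G (n := n)) := by
    refine Submodule.sum_mem _ fun j _ => ?_
    rw [smul_eq_C_mul]
    exact Ideal.mul_mem_left _ _ (scaleHom_intCl (t j) G hf)
  rw [hcomb] at hmem2
  exact hmem2

/-! ### Coefficient extraction for monomials in the integral closure -/

lemma exists_pow_of_monomial_mem_intCl (G : Set (Fin n →₀ ℕ))
    {A : Fin n →₀ ℕ} (h : monomial A (1 : F) ∈ intCl (mSpan F G (n := n))) :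
    ∃ m : ℕ, 0 < m ∧ ∃ B ∈ sumSet G m, B ≤ m • A := by
  obtain ⟨r, hr, a, ha, heq⟩ := h
  have hpow : ∀ j : ℕ, (monomial A (1 : F)) ^ j = monomial (j • A) (1 : F) := by
    intro j; rw [monomial_pow, one_pow]
  have hco := congrArg (coeff (r • A)) heq
  rw [coeff_add, coeff_sum, coeff_zero, hpow, coeff_monomial, if_pos rfl] at hco
  have hterm : ∀ i ∈ Finset.Icc 1 r,
      coeff (r • A) (a i * (monomial A (1 : F)) ^ (r - i)) = coeff (i • A) (a i) := by
    intro i hi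
    rw [Finset.mem_Icc] at hi
    rw [hpow, coeff_mul_monomial']
    have hle : (r - i) • A ≤ r • A := by
      intro x
      simp only [Finsupp.smul_apply, smul_eq_mul]
      have := hi.2
      exact Nat.mul_le_mul_right _ (by omega)
    rw [if_pos hle, mul_one]
    congr 1
    ext x
    rw [Finsupp.tsub_apply]
    simp only [Finsupp.smul_apply, smul_eq_mul]
    have := hi.2
    have h0 : r * A x - (r - i) * A x = i * A x := by
      have : (r - i) * A x + i * A x = r * A x := by
        rw [← Nat.add_mul]; congr 1; omega
      omega
    exact h0
  rw [Finset.sum_congr rfl hterm] at hco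
  have hsum : ∑ i ∈ Finset.Icc 1 r, coeff (i • A) (a i) ≠ 0 := by
    intro h0
    rw [h0, add_zero] at hco
    exact one_ne_zero hco
  obtain ⟨i, hi, hne⟩ := Finset.exists_ne_zero_of_sum_ne_zero hsum
  rw [Finset.mem_Icc] at hi
  have hmem : (i • A) ∈ (a i).support := mem_support_iff.mpr hne
  have hai := ha i hi.1 hi.2
  rw [mSpan_pow, mem_ideal_span_monomial_image] at hai
  obtain ⟨B, hB, hle⟩ := hai (i • A) hmem
  exact ⟨i, by omega, B, hB, hle⟩

lemma monomial_mem_intCl_of_pow (I : Ideal (MvPolynomial (Fin n) F))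
    {A : Fin n →₀ ℕ} {m : ℕ} (hm : 0 < m) (h : monomial (m • A) (1 : F) ∈ I ^ m) :
    monomial A (1 : F) ∈ intCl I := by
  refine ⟨m, hm, fun i => if i = m then -((monomial A (1 : F)) ^ m) else 0, ?_, ?_⟩
  · intro i h1 h2
    by_cases hi : i = m
    · subst hi
      simp only [if_pos rfl]
      refine neg_mem ?_
      rwa [monomial_pow, one_pow]
    · simp [hi]
  · have h2 : ∑ i ∈ Finset.Icc 1 m,
        (if i = m then -((monomial A (1 : F)) ^ m) else 0) * (monomial A (1 : F)) ^ (m - i)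
        = -((monomial A (1 : F)) ^ m) := by
      rw [Finset.sum_eq_single_of_mem m (Finset.mem_Icc.mpr ⟨hm, le_rfl⟩)]
      · simp
      · intro b _ hb
        simp [hb]
    rw [h2]
    ring

end IntClAux

/-- The integral closure of a monomial ideal is again a monomial ideal. -/
theorem intCl_isMonomialIdeal (I : Ideal (MvPolynomial (Fin n) k))
    (hI : IsMonomialIdeal I) :
    ∃ J : Ideal (MvPolynomial (Fin n) k),
      (J : Set (MvPolynomial (Fin n) k)) = intCl I ∧ IsMonomialIdeal J := by
  classical
  obtain ⟨G, rfl⟩ := hI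
  set M : Set (Fin n →₀ ℕ) :=
    {A | ∃ m : ℕ, 0 < m ∧ monomial (m • A) (1 : k) ∈ (IntClAux.mSpan k G (n := n)) ^ m} with hM
  refine ⟨Ideal.span ((fun A => monomial A (1 : k)) '' M), ?_, ⟨M, rfl⟩⟩
  apply Set.Subset.antisymm
  · intro x hx
    have hle : Ideal.span ((fun A => monomial A (1 : k)) '' M)
        ≤ IntClAux.intClIdeal (IntClAux.mSpan k G (n := n)) := by
      rw [Ideal.span_le]
      rintro g ⟨A, ⟨m, hm, hA⟩, rfl⟩
      exact IntClAux.monomial_mem_intCl_of_pow _ hm hA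
    exact hle hx
  · intro f hf
    rw [SetLike.mem_coe, mem_ideal_span_monomial_image]
    intro A hA
    refine ⟨A, ?_, le_rfl⟩
    set K := FractionRing (Polynomial k) with hK
    haveI : Infinite K :=
      Infinite.of_injective (algebraMap (Polynomial k) K)
        (IsFractionRing.injective (Polynomial k) K)
    set ρ : k →+* K := (algebraMap (Polynomial k) K).comp (Polynomial.C) with hρ
    have hfK : (MvPolynomial.map ρ) f ∈ intCl (IntClAux.mSpan K G (n := n)) := by
      obtain ⟨r, hr, a, ha, heq⟩ := hf
      refine ⟨r, hr, fun i => MvPolynomial.map ρ (a i),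
        fun i h1 h2 => IntClAux.map_mem_mSpan_pow ρ G (ha i h1 h2), ?_⟩
      have hmapeq := congrArg (MvPolynomial.map ρ) heq
      simpa [map_add, map_pow, map_sum, map_mul] using hmapeq
    have hAK : A ∈ (MvPolynomial.map ρ f).support := by
      rw [MvPolynomial.support_map_of_injective _ ρ.injective]
      exact hA
    have hmon := IntClAux.monomial_mem_intCl_of_mem_intCl G hfK A hAK
    have hc : coeff A (MvPolynomial.map ρ f) ≠ 0 := mem_support_iff.mp hAK
    have hmon1 : monomial A (1 : K) ∈ intCl (IntClAux.mSpan K G (n := n)) := by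
      have h2 : C ((coeff A (MvPolynomial.map ρ f))⁻¹)
          * monomial A (coeff A (MvPolynomial.map ρ f))
          ∈ IntClAux.intClIdeal (IntClAux.mSpan K G (n := n)) :=
        Ideal.mul_mem_left _ _ hmon
      rwa [C_mul_monomial, inv_mul_cancel₀ hc] at h2
    obtain ⟨m, hm, B, hB, hle⟩ := IntClAux.exists_pow_of_monomial_mem_intCl G hmon1
    exact ⟨m, hm, (IntClAux.mon_mem_mSpan_pow_iff k G (m • A) m).mpr ⟨B, hB, hle⟩⟩
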